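/- For every real x, the expression e^{6x}(4x³ − x² + 3x − 3) + e^{4x}(−4x³ + x² + 3x + 3) is nonnegative. -/

import Mathlib

lemma exp_ub_quad {s : ℝ} (hs : s ≤ 0) : Real.exp s ≤ 1 + s + s^2/2 := by
  have hd : ∀ t : ℝ, HasDerivAt (fun t : ℝ => 1 + t + t^2/2 - Real.exp t)
      (1 + t - Real.exp t) t := by
    intro t
    have h := (((hasDerivAt_id t).const_add 1).add ((hasDerivAt_pow 2 t).div_const 2)).sub
        (Real.hasDerivAt_exp t)
    simp only [id_eq] at h
    exact h.congr_deriv (by norm_num)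
  have key : AntitoneOn (fun t : ℝ => 1 + t + t^2/2 - Real.exp t) (Set.Iic 0) := by
    apply antitoneOn_of_deriv_nonpos (convex_Iic 0)
    · exact ((continuous_const.add continuous_id).add
        (continuous_pow 2 |>.div_const 2) |>.sub Real.continuous_exp).continuousOn
    · intro t _
      exact (hd t).differentiableAt.differentiableWithinAt
    · intro t _
      rw [(hd t).deriv]
      linarith [Real.add_one_le_exp t]
  have h0 := key (Set.mem_Iic.2 hs) (Set.mem_Iic.2 le_rfl) hs
  simp [Real.exp_zero] at h0
  linarith

lemma exp_lb_cubic (s : ℝ) : 1 + s + s^2/2 + s^3/6 ≤ Real.exp s := by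
  rcases le_or_gt s 0 with hs | hs
  · have hd : ∀ t : ℝ, HasDerivAt (fun t : ℝ => Real.exp t - (1 + t + t^2/2 + t^3/6))
        (Real.exp t - (1 + t + t^2/2)) t := by
      intro t
      have h := (Real.hasDerivAt_exp t).sub
          ((((hasDerivAt_id t).const_add 1).add ((hasDerivAt_pow 2 t).div_const 2)).add
            ((hasDerivAt_pow 3 t).div_const 6))
      simp only [id_eq] at h
      exact h.congr_deriv (by norm_num; ring)
    have key : AntitoneOn (fun t : ℝ => Real.exp t - (1 + t + t^2/2 + t^3/6)) (Set.Iic 0) := by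
      apply antitoneOn_of_deriv_nonpos (convex_Iic 0)
      · exact (Real.continuous_exp.sub (by continuity)).continuousOn
      · intro t _
        exact (hd t).differentiableAt.differentiableWithinAt
      · intro t ht
        rw [(hd t).deriv]
        have := exp_ub_quad (le_of_lt (by simpa using ht : t < 0))
        linarith
    have h0 := key (Set.mem_Iic.2 hs) (Set.mem_Iic.2 le_rfl) hs
    simp [Real.exp_zero] at h0
    linarith
  · have h := Real.sum_le_exp_of_nonneg hs.le 4
    have : ∑ i ∈ Finset.range 4, s ^ i / (Nat.factorial i : ℝ)
        = 1 + s + s^2/2 + s^3/6 := by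
      simp [Finset.sum_range_succ, Nat.factorial]
      try ring
    linarith [this ▸ h]

theorem C1_nonneg :
    ∀ x : ℝ, 0 ≤ Real.exp (6*x) * (4*x^3 - x^2 + 3*x - 3)
      + Real.exp (4*x) * (-4*x^3 + x^2 + 3*x + 3) := by
  intro x
  have hsplit : Real.exp (6*x) = Real.exp (4*x) * Real.exp (2*x) := by
    rw [← Real.exp_add]; ring_nf
  have hA : 0 < Real.exp (4*x) := Real.exp_pos _
  have hinner : 0 ≤ Real.exp (2*x) * (4*x^3 - x^2 + 3*x - 3)
      + (-4*x^3 + x^2 + 3*x + 3) := by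
    by_cases hP : 0 ≤ 4*x^3 - x^2 + 3*x - 3
    · have h1 : (0:ℝ) ≤ (Real.exp (2*x) - (1 + 2*x)) * (4*x^3 - x^2 + 3*x - 3) :=
        mul_nonneg (by linarith [Real.add_one_le_exp (2*x)]) hP
      nlinarith [sq_nonneg (8*x^2 - x), sq_nonneg x]
    · push_neg at hP
      have hx : x ≤ 3/4 := by nlinarith [sq_nonneg (x - 3/4), sq_nonneg x, sq_nonneg (x+1)]
      have hD : 0 < 1 - 2*x + 2*x^2 - (4/3)*x^3 := by
        nlinarith [mul_nonneg (by linarith : (0:ℝ) ≤ 3/4 - x)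
          (sq_nonneg (2*(3/4 - x) - 1/2))]
      have hE : Real.exp (2*x) * (1 - 2*x + 2*x^2 - (4/3)*x^3) ≤ 1 := by
        have hc := exp_lb_cubic (-(2*x))
        have h2 : 1 - 2*x + 2*x^2 - (4/3)*x^3 ≤ Real.exp (-(2*x)) := by
          nlinarith [hc]
        calc Real.exp (2*x) * (1 - 2*x + 2*x^2 - (4/3)*x^3)
            ≤ Real.exp (2*x) * Real.exp (-(2*x)) :=
              mul_le_mul_of_nonneg_left h2 (Real.exp_pos _).le
          _ = 1 := by rw [← Real.exp_add]; simp
      have hfact : (0:ℝ) ≤ (4*x^3 - x^2 + 3*x - 3)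
          + (-4*x^3 + x^2 + 3*x + 3) * (1 - 2*x + 2*x^2 - (4/3)*x^3) := by
        nlinarith [sq_nonneg (x^2*(8*x - 7)), sq_nonneg (x^2), sq_nonneg x]
      have hmul : 0 ≤ (Real.exp (2*x) * (4*x^3 - x^2 + 3*x - 3)
          + (-4*x^3 + x^2 + 3*x + 3)) * (1 - 2*x + 2*x^2 - (4/3)*x^3) := by
        have hEP : (4*x^3 - x^2 + 3*x - 3)
            ≤ Real.exp (2*x) * (4*x^3 - x^2 + 3*x - 3) * (1 - 2*x + 2*x^2 - (4/3)*x^3) := by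
          have := mul_le_mul_of_nonpos_right hE hP.le
          nlinarith [this]
        nlinarith [hEP, hfact]
      exact (mul_nonneg_iff_of_pos_right hD).mp hmul
  calc (0:ℝ) ≤ Real.exp (4*x) * (Real.exp (2*x) * (4*x^3 - x^2 + 3*x - 3)
        + (-4*x^3 + x^2 + 3*x + 3)) := mul_nonneg hA.le hinner
    _ = Real.exp (6*x) * (4*x^3 - x^2 + 3*x - 3)
        + Real.exp (4*x) * (-4*x^3 + x^2 + 3*x + 3) := by rw [hsplit]; ring
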